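/- Consider the 3-node network with α = (1, 0, 0), μ = (4/3, 2/3, 1), routing matrix P with rows (0, 1/2, 0), (1/2, 0, 0), (1/2, 1/2, 0), and overflow matrix Q with rows (0, 1/2, 1/2), (1/2, 0, 1/2), (0, 0, 0). Then for every ε ∈ [0, 1], the vector λ = (4/3 + ε, 2/3 + ε, ε) solves the overflow traffic equation λ = α + (λ ∧ μ)P + (λ − μ)⁺Q; in particular the equation has infinitely many solutions. -/
import Mathlib

/-- Example 4 with `α₁ = 1`: for every `ε ∈ [0,1]` the vector
`(4/3 + ε, 2/3 + ε, ε)` solves the overflow traffic equation; in particular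
the equation has infinitely many solutions. -/
theorem example4_critical_infinitely_many_solutions :
    let α : Fin 3 → ℝ := ![1, 0, 0]
    let μ : Fin 3 → ℝ := ![4/3, 2/3, 1]
    let P : Matrix (Fin 3) (Fin 3) ℝ := !![0, 1/2, 0; 1/2, 0, 0; 1/2, 1/2, 0]
    let Q : Matrix (Fin 3) (Fin 3) ℝ := !![0, 1/2, 1/2; 1/2, 0, 1/2; 0, 0, 0]
    (∀ ε : ℝ, 0 ≤ ε → ε ≤ 1 →
      ∀ i, (![4/3 + ε, 2/3 + ε, ε] : Fin 3 → ℝ) i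
        = α i + ∑ j, min ((![4/3 + ε, 2/3 + ε, ε] : Fin 3 → ℝ) j) (μ j) * P j i
          + ∑ j, max ((![4/3 + ε, 2/3 + ε, ε] : Fin 3 → ℝ) j - μ j) 0 * Q j i) ∧
    {lam : Fin 3 → ℝ |
      ∀ i, lam i = α i + ∑ j, min (lam j) (μ j) * P j i
        + ∑ j, max (lam j - μ j) 0 * Q j i}.Infinite := by
  intro α μ P Q
  have hmain : ∀ ε : ℝ, 0 ≤ ε → ε ≤ 1 →
      ∀ i, (![4/3 + ε, 2/3 + ε, ε] : Fin 3 → ℝ) i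
        = α i + ∑ j, min ((![4/3 + ε, 2/3 + ε, ε] : Fin 3 → ℝ) j) (μ j) * P j i
          + ∑ j, max ((![4/3 + ε, 2/3 + ε, ε] : Fin 3 → ℝ) j - μ j) 0 * Q j i := by
    intro ε h0 h1 i
    have m1 : min (4/3 + ε) (4/3 : ℝ) = 4/3 := min_eq_right (by linarith)
    have m2 : min (2/3 + ε) (2/3 : ℝ) = 2/3 := min_eq_right (by linarith)
    have m3 : min ε (1 : ℝ) = ε := min_eq_left h1
    have x1 : max (4/3 + ε - 4/3) (0 : ℝ) = ε := by rw [max_eq_left (by linarith)]; ring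
    have x2 : max (2/3 + ε - 2/3) (0 : ℝ) = ε := by rw [max_eq_left (by linarith)]; ring
    have x3 : max (ε - 1) (0 : ℝ) = 0 := max_eq_right (by linarith)
    fin_cases i <;>
      simp [α, μ, P, Q, Fin.sum_univ_three, m1, m2, m3, x1, x2, x3, sup_eq_left.mpr h0, Matrix.vecHead, Matrix.vecTail] <;> ring
  refine ⟨hmain, ?_⟩
  have hinj : Function.Injective (fun ε : ℝ => (![4/3 + ε, 2/3 + ε, ε] : Fin 3 → ℝ)) := by
    intro a b hab
    have := congrFun hab 2
    simpa using this
  have hsub : (fun ε : ℝ => (![4/3 + ε, 2/3 + ε, ε] : Fin 3 → ℝ)) '' Set.Icc 0 1 ⊆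
      {lam : Fin 3 → ℝ |
        ∀ i, lam i = α i + ∑ j, min (lam j) (μ j) * P j i
          + ∑ j, max (lam j - μ j) 0 * Q j i} := by
    rintro _ ⟨ε, ⟨h0, h1⟩, rfl⟩
    exact hmain ε h0 h1
  exact Set.Infinite.mono hsub ((Set.Icc_infinite (by norm_num)).image (hinj.injOn))
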